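/- arXiv:2002.11068 — 2 statements merged into one kernel-verified Lean document; each statement's English description precedes it below -/
import Mathlib

section
/- Let α > 0 be such that θ(x) ≤ (1 + α)·x for all x > 0. Let ε : [7,∞) → (0,∞) be a function such that for every t ≥ 7 one has ψ(x) − x ≤ ε(t)·x for all x ≥ e^t. Assume there exists x₁ ≥ e⁷ such that θ(x) < x for all 0 < x ≤ x₁. Let b ≥ 7. Then for all x ≥ e^b one has ψ(x) − θ(x) < a₁·x^{1/2} + a₂·x^{1/3}, where a₁ = 1 + ε(log x₁) if b ≤ 2·log x₁ and a₁ = 1 + ε(b/2) if b > 2·log x₁, and a₂ = (1 + α)·max( f(e^b), f(2^{⌊b/log 2⌋ + 1}) ). -/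
/-- Chebyshev theta function: `θ(x) = ∑_{p ≤ x, p prime} log p`. -/
noncomputable def chebTheta (x : ℝ) : ℝ :=
  ∑ p ∈ (Finset.range (⌊x⌋₊ + 1)).filter Nat.Prime, Real.log p

/-- Chebyshev psi function: `ψ(x) = ∑_{n ≤ x} Λ(n)`. -/
noncomputable def chebPsi (x : ℝ) : ℝ :=
  ∑ n ∈ Finset.range (⌊x⌋₊ + 1), ArithmeticFunction.vonMangoldt n


/-- The function `f(x) = ∑_{k=3}^{⌊log x / log 2⌋} x^(1/k - 1/3)`. -/
noncomputable def auxF (x : ℝ) : ℝ :=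
  ∑ k ∈ Finset.Icc 3 ⌊Real.log x / Real.log 2⌋₊, x ^ ((k : ℝ)⁻¹ - (3 : ℝ)⁻¹)

open Finset Real ArithmeticFunction

lemma theta_le_psi (y : ℝ) : chebTheta y ≤ chebPsi y := by
  unfold chebTheta chebPsi
  calc ∑ p ∈ (Finset.range (⌊y⌋₊ + 1)).filter Nat.Prime, Real.log p
      = ∑ p ∈ (Finset.range (⌊y⌋₊ + 1)).filter Nat.Prime, Λ p := by
        refine Finset.sum_congr rfl fun p hp => ?_
        rw [vonMangoldt_apply_prime (Finset.mem_filter.1 hp).2]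
    _ ≤ ∑ n ∈ Finset.range (⌊y⌋₊ + 1), Λ n :=
        Finset.sum_le_sum_of_subset_of_nonneg (Finset.filter_subset _ _)
          (fun i _ _ => vonMangoldt_nonneg)

lemma psi_eq_sum_theta (x : ℝ) (hx : 1 ≤ x) :
    chebPsi x = ∑ k ∈ Finset.Icc 1 ⌊Real.log x / Real.log 2⌋₊,
      chebTheta (x ^ ((k : ℝ)⁻¹)) := by
  have hx0 : (0:ℝ) < x := lt_of_lt_of_le zero_lt_one hx
  have hlog2 : (0:ℝ) < Real.log 2 := Real.log_pos one_lt_two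
  unfold chebPsi chebTheta
  have L : ∑ n ∈ Finset.range (⌊x⌋₊ + 1), Λ n
      = ∑ n ∈ (Finset.range (⌊x⌋₊ + 1)).filter IsPrimePow, Real.log n.minFac := by
    rw [Finset.sum_filter]
    exact Finset.sum_congr rfl fun n _ => vonMangoldt_apply
  rw [L]
  rw [← Finset.sum_sigma (Finset.Icc 1 ⌊Real.log x / Real.log 2⌋₊)
      (fun k => (Finset.range (⌊x ^ ((k:ℕ):ℝ)⁻¹⌋₊ + 1)).filter Nat.Prime)
      (fun y => Real.log (y.2 : ℕ))]
  refine Finset.sum_nbij' (i := fun n => (⟨n.factorization n.minFac, n.minFac⟩ : Σ _ : ℕ, ℕ))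
    (j := fun kp => kp.2 ^ kp.1) ?_ ?_ ?_ ?_ ?_
  · rintro n h
    simp only [Finset.mem_sigma, Finset.mem_Icc, Finset.mem_filter, Finset.mem_range,
      Nat.lt_succ_iff] at h ⊢
    obtain ⟨hn, hpp⟩ := h
    have hn1 : n ≠ 1 := hpp.ne_one
    have hn0 : n ≠ 0 := hpp.ne_zero
    have hpm : n.minFac.Prime := Nat.minFac_prime hn1
    have hfac : n.minFac ^ n.factorization n.minFac = n := hpp.minFac_pow_factorization_eq
    have hk1 : 1 ≤ n.factorization n.minFac := by
      rcases Nat.eq_zero_or_pos (n.factorization n.minFac) with h0 | h1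
      · rw [h0, pow_zero] at hfac; exact absurd hfac.symm hn1
      · exact h1
    have hnx : (n : ℝ) ≤ x := le_trans (Nat.cast_le.2 hn) (Nat.floor_le hx0.le)
    refine ⟨⟨hk1, ?_⟩, ?_, hpm⟩
    · apply Nat.le_floor
      rw [le_div_iff₀ hlog2]
      set k := n.factorization n.minFac
      have h2k : (2:ℝ) ^ (k:ℕ) ≤ (n:ℝ) := by
        calc ((2:ℝ)) ^ k ≤ (n.minFac : ℝ) ^ k := by
              apply pow_le_pow_left₀ (by norm_num)
              exact_mod_cast hpm.two_le
          _ = (n:ℝ) := by exact_mod_cast congrArg (Nat.cast (R := ℝ)) hfac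
      have := Real.log_le_log (by positivity) (le_trans h2k hnx)
      rw [Real.log_pow] at this
      exact this
    · apply Nat.le_floor
      set k := n.factorization n.minFac
      rw [Real.le_rpow_inv_iff_of_pos (by positivity) hx0.le
        (by exact_mod_cast hk1 : (0:ℝ) < (k:ℝ))]
      rw [Real.rpow_natCast]
      calc ((n.minFac : ℝ)) ^ (k:ℕ) = (n:ℝ) := by
            exact_mod_cast congrArg (Nat.cast (R := ℝ)) hfac
        _ ≤ x := hnx
  · rintro ⟨k, p⟩ h
    simp only [Finset.mem_sigma, Finset.mem_Icc, Finset.mem_filter, Finset.mem_range,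
      Nat.lt_succ_iff] at h ⊢
    obtain ⟨⟨hk1, hkK⟩, hp, hpprime⟩ := h
    constructor
    · rw [Nat.le_floor_iff hx0.le]
      have hple : (p:ℝ) ≤ x ^ ((k:ℝ)⁻¹) := by
        exact_mod_cast (Nat.le_floor_iff (Real.rpow_nonneg hx0.le _)).1 hp
      have := (Real.le_rpow_inv_iff_of_pos (by positivity) hx0.le
        (by exact_mod_cast hk1 : (0:ℝ) < (k:ℝ))).1 hple
      calc ((p ^ k : ℕ) : ℝ) = (p:ℝ) ^ (k:ℝ) := by
            rw [Real.rpow_natCast]; push_cast; ring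
        _ ≤ x := this
    · exact hpprime.isPrimePow.pow (by omega)
  · rintro n h
    simp only [Finset.mem_filter, Finset.mem_range] at h
    exact h.2.minFac_pow_factorization_eq
  · rintro ⟨k, p⟩ h
    simp only [Finset.mem_sigma, Finset.mem_Icc, Finset.mem_filter, Finset.mem_range,
      Nat.lt_succ_iff] at h
    obtain ⟨⟨hk1, hkK⟩, hp, hpprime⟩ := h
    have h1 : (p ^ k).minFac = p := hpprime.pow_minFac (by omega)
    have h2 : (p ^ k).factorization = Finsupp.single p k := hpprime.factorization_pow
    simp [h1, h2]
  · rintro n h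
    rfl

lemma two_rpow_le_of_pow (c a : ℝ) (n : ℕ) (hn : n ≠ 0) (ha : 0 ≤ a)
    (h : (2:ℝ) ^ (c * n) ≤ a ^ n) : (2:ℝ) ^ c ≤ a := by
  apply le_of_pow_le_pow_left₀ hn ha
  rwa [← Real.rpow_natCast ((2:ℝ) ^ c) n, ← Real.rpow_mul (by norm_num)]

lemma le_two_rpow_of_pow (c a : ℝ) (n : ℕ) (hn : n ≠ 0) (h : a ^ n ≤ (2:ℝ) ^ (c * n)) :
    a ≤ (2:ℝ) ^ c := by
  apply le_of_pow_le_pow_left₀ hn (Real.rpow_nonneg (by norm_num) c)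
  rwa [← Real.rpow_natCast ((2:ℝ) ^ c) n, ← Real.rpow_mul (by norm_num)]

lemma num1 : (2:ℝ) ^ (-(6:ℝ)⁻¹) ≤ 0.891 := by
  apply two_rpow_le_of_pow _ _ 6 (by norm_num) (by norm_num)
  rw [show (-(6:ℝ)⁻¹ * (6:ℕ)) = ((-1 : ℤ) : ℝ) by push_cast; ring, Real.rpow_intCast]
  norm_num

lemma num2 : (2:ℝ) ^ (-(5:ℝ)/24) ≤ 0.866 := by
  apply two_rpow_le_of_pow _ _ 24 (by norm_num) (by norm_num)
  rw [show (-(5:ℝ)/24 * (24:ℕ)) = ((-5 : ℤ) : ℝ) by push_cast; ring, Real.rpow_intCast]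
  norm_num

lemma num3 : (1.41 : ℝ) ≤ (2:ℝ) ^ ((1:ℝ)/2) := by
  apply le_two_rpow_of_pow _ _ 2 (by norm_num)
  rw [show ((1:ℝ)/2 * (2:ℕ)) = ((1 : ℤ) : ℝ) by push_cast; ring, Real.rpow_intCast]
  norm_num

lemma num4 : (2:ℝ) ^ (-(3:ℝ)⁻¹) ≤ 0.7938 := by
  apply two_rpow_le_of_pow _ _ 3 (by norm_num) (by norm_num)
  rw [show (-(3:ℝ)⁻¹ * (3:ℕ)) = ((-1 : ℤ) : ℝ) by push_cast; ring, Real.rpow_intCast]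
  norm_num

lemma auxF_two_pow (m : ℕ) :
    auxF ((2:ℝ) ^ m) = ∑ k ∈ Finset.Icc 3 m, (2:ℝ) ^ ((m:ℝ) * ((k:ℝ)⁻¹ - (3:ℝ)⁻¹)) := by
  unfold auxF
  have h1 : Real.log ((2:ℝ) ^ m) / Real.log 2 = (m:ℝ) := by
    rw [Real.log_pow]
    field_simp
  rw [h1, Nat.floor_natCast]
  refine Finset.sum_congr rfl fun k _ => ?_
  rw [← Real.rpow_natCast 2 m, ← Real.rpow_mul (by norm_num)]

set_option maxHeartbeats 1000000 in
lemma auxF_step (m : ℕ) (hm : 11 ≤ m) : auxF ((2:ℝ) ^ (m+1)) ≤ auxF ((2:ℝ) ^ m) := by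
  have h2 : (1:ℝ) ≤ 2 := one_le_two
  have hM : (11:ℝ) ≤ (m:ℝ) := by exact_mod_cast hm
  rw [auxF_two_pow, auxF_two_pow]
  rw [Finset.sum_Icc_succ_top (by omega : 3 ≤ m + 1)]
  set M := (m:ℝ) with hMdef
  have hcast : ∀ k : ℕ, (((m+1 : ℕ)):ℝ) * ((k:ℝ)⁻¹ - 3⁻¹) = (M+1) * ((k:ℝ)⁻¹ - 3⁻¹) := by
    intro k; push_cast; ring
  set P : ℝ := (2:ℝ) ^ (1 - M/3) with hP
  have hPpos : 0 < P := Real.rpow_pos_of_pos two_pos _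
  have hcast : (((m+1 : ℕ)):ℝ) = M + 1 := by push_cast; ring
  have hMne : M + 1 ≠ 0 := by nlinarith
  rw [hcast]
  have htop : (2:ℝ) ^ ((M+1) * ((M+1)⁻¹ - 3⁻¹)) ≤ P * 0.7938 := by
    have hexp : (M+1) * ((M+1)⁻¹ - 3⁻¹) = (1 - M/3) + (-(3:ℝ)⁻¹) := by
      field_simp
      ring
    rw [hexp, Real.rpow_add two_pos]
    exact mul_le_mul_of_nonneg_left num4 hPpos.le
  have hA : ∀ k ∈ Finset.Ioc (5:ℕ) 7, (2:ℝ)^((1:ℝ)/2) * P * 0.109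
      ≤ 2 ^ (M * ((k:ℝ)⁻¹ - 3⁻¹)) - 2 ^ ((M+1) * ((k:ℝ)⁻¹ - 3⁻¹)) := by
    intro k hk
    simp only [Finset.mem_Ioc] at hk
    have hk6 : (6:ℝ) ≤ (k:ℝ) := by
      have h6 : (6:ℕ) ≤ k := hk.1
      exact_mod_cast h6
    have hk7 : (k:ℝ) ≤ 7 := by exact_mod_cast hk.2
    have hkpos : (0:ℝ) < (k:ℝ) := by linarith
    have hsplit : (2:ℝ) ^ ((M+1) * ((k:ℝ)⁻¹ - 3⁻¹))
        = 2 ^ (M * ((k:ℝ)⁻¹ - 3⁻¹)) * 2 ^ ((k:ℝ)⁻¹ - 3⁻¹) := by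
      rw [← Real.rpow_add two_pos]; ring_nf
    have hMk : M * ((k:ℝ)⁻¹ - 3⁻¹) = M/(k:ℝ) - M/3 := by
      field_simp
    have hbase : (2:ℝ)^((1:ℝ)/2) * P ≤ 2 ^ (M * ((k:ℝ)⁻¹ - 3⁻¹)) := by
      rw [hP, ← Real.rpow_add two_pos]
      apply Real.rpow_le_rpow_of_exponent_le h2
      have h32 : (3:ℝ)/2 ≤ M / (k:ℝ) := by
        rw [le_div_iff₀ hkpos]; nlinarith
      rw [hMk]; linarith
    have hfac : (2:ℝ) ^ ((k:ℝ)⁻¹ - 3⁻¹) ≤ 0.891 := by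
      refine le_trans (Real.rpow_le_rpow_of_exponent_le h2 ?_) num1
      have : (k:ℝ)⁻¹ ≤ 6⁻¹ := by
        apply inv_anti₀ (by norm_num) hk6
      linarith
    have h0 : (0:ℝ) < 2 ^ (M * ((k:ℝ)⁻¹ - 3⁻¹)) := Real.rpow_pos_of_pos two_pos _
    rw [hsplit]
    calc (2:ℝ)^((1:ℝ)/2) * P * 0.109
        ≤ 2 ^ (M * ((k:ℝ)⁻¹ - 3⁻¹)) * (1 - 2 ^ ((k:ℝ)⁻¹ - 3⁻¹)) := by
          apply mul_le_mul hbase (by linarith) (by norm_num) h0.le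
      _ = 2 ^ (M * ((k:ℝ)⁻¹ - 3⁻¹)) - 2 ^ (M * ((k:ℝ)⁻¹ - 3⁻¹)) * 2 ^ ((k:ℝ)⁻¹ - 3⁻¹) := by
          ring
  have hB : ∀ k ∈ Finset.Ioc 7 m, P * 0.134
      ≤ 2 ^ (M * ((k:ℝ)⁻¹ - 3⁻¹)) - 2 ^ ((M+1) * ((k:ℝ)⁻¹ - 3⁻¹)) := by
    intro k hk
    simp only [Finset.mem_Ioc] at hk
    have hk8 : (8:ℝ) ≤ (k:ℝ) := by
      have h8 : (8:ℕ) ≤ k := hk.1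
      exact_mod_cast h8
    have hkm : (k:ℝ) ≤ M := by rw [hMdef]; exact_mod_cast hk.2
    have hkpos : (0:ℝ) < (k:ℝ) := by linarith
    have hsplit : (2:ℝ) ^ ((M+1) * ((k:ℝ)⁻¹ - 3⁻¹))
        = 2 ^ (M * ((k:ℝ)⁻¹ - 3⁻¹)) * 2 ^ ((k:ℝ)⁻¹ - 3⁻¹) := by
      rw [← Real.rpow_add two_pos]; ring_nf
    have hMk : M * ((k:ℝ)⁻¹ - 3⁻¹) = M/(k:ℝ) - M/3 := by
      field_simp
    have hbase : P ≤ 2 ^ (M * ((k:ℝ)⁻¹ - 3⁻¹)) := by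
      rw [hP]
      apply Real.rpow_le_rpow_of_exponent_le h2
      have h1k : (1:ℝ) ≤ M / (k:ℝ) := by
        rw [le_div_iff₀ hkpos]; nlinarith
      rw [hMk]; linarith
    have hfac : (2:ℝ) ^ ((k:ℝ)⁻¹ - 3⁻¹) ≤ 0.866 := by
      refine le_trans (Real.rpow_le_rpow_of_exponent_le h2 ?_) num2
      have : (k:ℝ)⁻¹ ≤ 8⁻¹ := by
        apply inv_anti₀ (by norm_num) hk8
      linarith
    have h0 : (0:ℝ) < 2 ^ (M * ((k:ℝ)⁻¹ - 3⁻¹)) := Real.rpow_pos_of_pos two_pos _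
    rw [hsplit]
    calc P * 0.134
        ≤ 2 ^ (M * ((k:ℝ)⁻¹ - 3⁻¹)) * (1 - 2 ^ ((k:ℝ)⁻¹ - 3⁻¹)) := by
          apply mul_le_mul hbase (by linarith) (by norm_num) h0.le
      _ = 2 ^ (M * ((k:ℝ)⁻¹ - 3⁻¹)) - 2 ^ (M * ((k:ℝ)⁻¹ - 3⁻¹)) * 2 ^ ((k:ℝ)⁻¹ - 3⁻¹) := by
          ring
  set diff : ℕ → ℝ := fun k => 2 ^ (M * ((k:ℝ)⁻¹ - 3⁻¹)) - 2 ^ ((M+1) * ((k:ℝ)⁻¹ - 3⁻¹))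
    with hdiffdef
  have hsumA : 2 * ((2:ℝ)^((1:ℝ)/2) * P * 0.109) ≤ ∑ k ∈ Finset.Ioc 5 7, diff k := by
    have := Finset.card_nsmul_le_sum (Finset.Ioc 5 7) diff
      ((2:ℝ)^((1:ℝ)/2) * P * 0.109) hA
    simpa [Nat.card_Ioc, nsmul_eq_mul] using this
  have hsumB : 4 * (P * 0.134) ≤ ∑ k ∈ Finset.Ioc 7 m, diff k := by
    have h := Finset.card_nsmul_le_sum (Finset.Ioc 7 m) diff (P * 0.134) hB
    rw [Nat.card_Ioc, nsmul_eq_mul] at h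
    refine le_trans ?_ h
    have hc : (4:ℝ) ≤ ((m - 7 : ℕ) : ℝ) := by
      have : (4:ℕ) ≤ m - 7 := by omega
      exact_mod_cast this
    have : (0:ℝ) ≤ P * 0.134 := by positivity
    nlinarith
  have hIoc : ∑ k ∈ Finset.Ioc 5 7, diff k + ∑ k ∈ Finset.Ioc 7 m, diff k
      = ∑ k ∈ Finset.Ioc 5 m, diff k :=
    Finset.sum_Ioc_consecutive diff (by omega) (by omega)
  have key : P * 0.7938 ≤ ∑ k ∈ Finset.Icc 3 m, diff k := by
    have hsub : Finset.Ioc 5 m ⊆ Finset.Icc 3 m := by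
      intro k hk
      simp only [Finset.mem_Ioc] at hk
      simp only [Finset.mem_Icc]
      omega
    have hnn : ∀ k ∈ Finset.Icc 3 m, k ∉ Finset.Ioc 5 m → 0 ≤ diff k := by
      intro k hk _
      simp only [Finset.mem_Icc] at hk
      have hk3 : (3:ℝ) ≤ (k:ℝ) := by exact_mod_cast hk.1
      have hc0 : (k:ℝ)⁻¹ - 3⁻¹ ≤ 0 := by
        have : (k:ℝ)⁻¹ ≤ 3⁻¹ := inv_anti₀ (by norm_num) hk3
        linarith
      have : (2:ℝ) ^ ((M+1) * ((k:ℝ)⁻¹ - 3⁻¹)) ≤ 2 ^ (M * ((k:ℝ)⁻¹ - 3⁻¹)) := by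
        apply Real.rpow_le_rpow_of_exponent_le h2
        nlinarith
      simp only [hdiffdef]
      linarith
    refine le_trans ?_ (Finset.sum_le_sum_of_subset_of_nonneg hsub hnn)
    rw [← hIoc]
    have hnum : P * 0.7938 ≤ 2 * ((2:ℝ)^((1:ℝ)/2) * P * 0.109) + 4 * (P * 0.134) := by
      nlinarith [mul_nonneg (sub_nonneg.2 num3) hPpos.le]
    linarith
  have hdist : ∑ k ∈ Finset.Icc 3 m, diff k
      = ∑ k ∈ Finset.Icc 3 m, (2:ℝ) ^ (M * ((k:ℝ)⁻¹ - 3⁻¹))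
        - ∑ k ∈ Finset.Icc 3 m, (2:ℝ) ^ ((M+1) * ((k:ℝ)⁻¹ - 3⁻¹)) := by
    simp only [hdiffdef]
    rw [Finset.sum_sub_distrib]
  linarith [key, htop, hdist]

lemma auxF_chain (a : ℕ) (ha : 11 ≤ a) : ∀ n : ℕ, auxF ((2:ℝ) ^ (a + n)) ≤ auxF ((2:ℝ) ^ a) := by
  intro n
  induction n with
  | zero => simp
  | succ n ih =>
    have := auxF_step (a + n) (by omega)
    rw [show a + (n+1) = (a + n) + 1 by omega]
    exact le_trans this ih

lemma auxF_le_max (b x : ℝ) (hb : 7 ≤ b) (hx : Real.exp b ≤ x) :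
    auxF x ≤ max (auxF (Real.exp b)) (auxF ((2:ℝ) ^ (⌊b / Real.log 2⌋₊ + 1))) := by
  have hlog2 : (0:ℝ) < Real.log 2 := Real.log_pos one_lt_two
  have hx0 : 0 < x := lt_of_lt_of_le (Real.exp_pos b) hx
  have hlx : b ≤ Real.log x := (Real.le_log_iff_exp_le hx0).2 hx
  have hlx0 : (0:ℝ) ≤ Real.log x := by linarith
  set K := ⌊Real.log x / Real.log 2⌋₊ with hK
  set K₀ := ⌊b / Real.log 2⌋₊ with hK₀
  have hKK : K₀ ≤ K := by
    apply Nat.floor_le_floor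
    apply div_le_div_of_nonneg_right hlx hlog2.le
  have hcneg : ∀ k : ℕ, 3 ≤ k → (k:ℝ)⁻¹ - 3⁻¹ ≤ 0 := by
    intro k hk
    have hk3 : (3:ℝ) ≤ (k:ℝ) := by exact_mod_cast hk
    have : (k:ℝ)⁻¹ ≤ 3⁻¹ := inv_anti₀ (by norm_num) hk3
    linarith
  rcases eq_or_lt_of_le hKK with heq | hlt
  · refine le_trans ?_ (le_max_left _ _)
    unfold auxF
    rw [Real.log_exp, ← hK, ← hK₀, ← heq]
    apply Finset.sum_le_sum
    intro k hk
    simp only [Finset.mem_Icc] at hk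
    exact Real.rpow_le_rpow_of_nonpos (Real.exp_pos b) hx (hcneg k hk.1)
  · refine le_trans ?_ (le_max_right _ _)
    have h2K : (2:ℝ) ^ K ≤ x := by
      have hKle : (K:ℝ) * Real.log 2 ≤ Real.log x := by
        have h := Nat.floor_le (show (0:ℝ) ≤ Real.log x / Real.log 2 by positivity)
        rw [← hK] at h
        calc (K:ℝ) * Real.log 2 ≤ (Real.log x / Real.log 2) * Real.log 2 := by
              apply mul_le_mul_of_nonneg_right h hlog2.le
          _ = Real.log x := by field_simp
      calc (2:ℝ) ^ K = Real.exp ((K:ℝ) * Real.log 2) := by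
            rw [← Real.log_pow, Real.exp_log (by positivity)]
        _ ≤ x := by
            rw [← Real.exp_log hx0]
            exact Real.exp_le_exp.2 hKle
    have h1 : auxF x ≤ auxF ((2:ℝ) ^ K) := by
      rw [auxF_two_pow]
      unfold auxF
      rw [← hK]
      apply Finset.sum_le_sum
      intro k hk
      simp only [Finset.mem_Icc] at hk
      have := Real.rpow_le_rpow_of_nonpos (by positivity : (0:ℝ) < (2:ℝ)^K) h2K (hcneg k hk.1)
      calc x ^ ((k:ℝ)⁻¹ - 3⁻¹) ≤ ((2:ℝ) ^ K) ^ ((k:ℝ)⁻¹ - 3⁻¹) := this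
        _ = (2:ℝ) ^ ((K:ℝ) * ((k:ℝ)⁻¹ - 3⁻¹)) := by
            rw [← Real.rpow_natCast 2 K, ← Real.rpow_mul (by norm_num)]
    have hK₀10 : 10 ≤ K₀ := by
      rw [hK₀]
      apply Nat.le_floor
      rw [le_div_iff₀ hlog2]
      push_cast
      nlinarith [Real.log_two_lt_d9]
    have h2 : auxF ((2:ℝ) ^ K) ≤ auxF ((2:ℝ) ^ (K₀ + 1)) := by
      obtain ⟨n, hn⟩ : ∃ n, K = (K₀ + 1) + n := ⟨K - (K₀ + 1), by omega⟩
      rw [hn]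
      exact auxF_chain (K₀ + 1) (by omega) n
    exact h1.trans h2

set_option maxHeartbeats 1600000 in
theorem statement7 (α : ℝ) (hα : α > 0)
    (hθα : ∀ x : ℝ, x > 0 → chebTheta x ≤ (1 + α) * x)
    (ε : ℝ → ℝ) (hεpos : ∀ t : ℝ, t ≥ 7 → ε t > 0)
    (hε : ∀ t : ℝ, t ≥ 7 → ∀ x : ℝ, x ≥ Real.exp t → chebPsi x - x ≤ ε t * x)
    (x₁ : ℝ) (hx₁ : x₁ ≥ Real.exp 7)
    (hθ : ∀ x : ℝ, 0 < x → x ≤ x₁ → chebTheta x < x)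
    (b : ℝ) (hb : b ≥ 7) :
    ∀ x : ℝ, x ≥ Real.exp b →
      chebPsi x - chebTheta x <
        (if b ≤ 2 * Real.log x₁ then 1 + ε (Real.log x₁) else 1 + ε (b / 2)) *
            x ^ ((1 : ℝ) / 2) +
          ((1 + α) *
            max (auxF (Real.exp b)) (auxF ((2 : ℝ) ^ (⌊b / Real.log 2⌋₊ + 1)))) *
            x ^ ((1 : ℝ) / 3) := by
  intro x hxe
  have hlog2 : (0:ℝ) < Real.log 2 := Real.log_pos one_lt_two
  have hx0 : 0 < x := lt_of_lt_of_le (Real.exp_pos b) hxe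
  have hx1 : (1:ℝ) ≤ x := by nlinarith [Real.add_one_le_exp b]
  have hLb : b ≤ Real.log x := (Real.le_log_iff_exp_le hx0).2 hxe
  have hL7 : (7:ℝ) ≤ Real.log x := le_trans hb hLb
  set K := ⌊Real.log x / Real.log 2⌋₊ with hK
  have hK10 : 10 ≤ K := by
    rw [hK]
    apply Nat.le_floor
    rw [le_div_iff₀ hlog2]
    push_cast
    nlinarith [Real.log_two_lt_d9]
  have hid := psi_eq_sum_theta x hx1
  rw [← hK] at hid
  have hsplit : Finset.Icc 1 K = insert 1 (insert 2 (Finset.Icc 3 K)) := by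
    ext k
    simp only [Finset.mem_Icc, Finset.mem_insert]
    omega
  rw [hsplit, Finset.sum_insert (by simp only [Finset.mem_insert, Finset.mem_Icc]; omega),
    Finset.sum_insert (by simp only [Finset.mem_Icc]; omega)] at hid
  simp only [Nat.cast_one, Nat.cast_ofNat, inv_one, Real.rpow_one] at hid
  set y := x ^ ((2:ℝ))⁻¹ with hy
  have hy0 : 0 < y := Real.rpow_pos_of_pos hx0 _
  have hyexp : Real.exp (b/2) ≤ y := by
    rw [hy, Real.rpow_def_of_pos hx0]
    apply Real.exp_le_exp.2
    nlinarith
  have hx₁0 : 0 < x₁ := lt_of_lt_of_le (Real.exp_pos 7) hx₁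
  have hlx₁7 : (7:ℝ) ≤ Real.log x₁ := by
    rw [Real.le_log_iff_exp_le hx₁0]
    exact hx₁
  have hθy : chebTheta y ≤
      (if b ≤ 2 * Real.log x₁ then 1 + ε (Real.log x₁) else 1 + ε (b / 2)) * y := by
    split_ifs with hcase
    · by_cases hyx₁ : y ≤ x₁
      · have h := hθ y hy0 hyx₁
        have hε1 := hεpos _ hlx₁7
        nlinarith
      · push_neg at hyx₁
        have hpsi := hε (Real.log x₁) hlx₁7 y (by rw [Real.exp_log hx₁0]; exact hyx₁.le)
        have hty := theta_le_psi y
        nlinarith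
    · push_neg at hcase
      have hb2 : (7:ℝ) ≤ b/2 := by linarith
      have hpsi := hε (b/2) hb2 y hyexp
      have hty := theta_le_psi y
      nlinarith
  have hK10R : (10:ℝ) ≤ (K:ℝ) := by exact_mod_cast hK10
  have hKpos : (0:ℝ) < (K:ℝ) := by linarith
  have hxK : x ^ ((K:ℝ))⁻¹ ≤ x₁ := by
    have hfl := Nat.lt_floor_add_one (Real.log x / Real.log 2)
    rw [← hK] at hfl
    have hLK : Real.log x < ((K:ℝ) + 1) * Real.log 2 := by
      calc Real.log x = (Real.log x / Real.log 2) * Real.log 2 := by field_simp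
        _ < ((K:ℝ) + 1) * Real.log 2 := by
            apply mul_lt_mul_of_pos_right _ hlog2
            exact_mod_cast hfl
    have hK1 : (K:ℝ) + 1 ≤ 2 * (K:ℝ) := by linarith
    have hexp4 : Real.exp (2 * Real.log 2) = 4 := by
      rw [show (2:ℝ) * Real.log 2 = Real.log 4 by
        rw [show (4:ℝ) = 2 ^ (2:ℕ) by norm_num, Real.log_pow]; push_cast; ring]
      exact Real.exp_log (by norm_num)
    have hbound : Real.log x * (K:ℝ)⁻¹ ≤ 2 * Real.log 2 := by
      rw [← div_eq_mul_inv, div_le_iff₀ hKpos]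
      nlinarith
    calc x ^ ((K:ℝ))⁻¹ = Real.exp (Real.log x * (K:ℝ)⁻¹) := Real.rpow_def_of_pos hx0 _
      _ ≤ Real.exp (2 * Real.log 2) := Real.exp_le_exp.2 hbound
      _ = 4 := hexp4
      _ ≤ Real.exp 7 := by nlinarith [Real.add_one_le_exp (7:ℝ)]
      _ ≤ x₁ := hx₁
  have hstrict : chebTheta (x ^ ((K:ℝ))⁻¹) < (1 + α) * x ^ ((K:ℝ))⁻¹ := by
    have hpos : (0:ℝ) < x ^ ((K:ℝ))⁻¹ := Real.rpow_pos_of_pos hx0 _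
    have h := hθ _ hpos hxK
    nlinarith
  have htail : ∑ k ∈ Finset.Icc 3 K, chebTheta (x ^ ((k:ℝ))⁻¹)
      < ∑ k ∈ Finset.Icc 3 K, (1 + α) * x ^ ((k:ℝ))⁻¹ := by
    apply Finset.sum_lt_sum
    · intro i _
      exact hθα _ (Real.rpow_pos_of_pos hx0 _)
    · exact ⟨K, by simp only [Finset.mem_Icc]; omega, hstrict⟩
  have hsum_eq : ∑ k ∈ Finset.Icc 3 K, (1 + α) * x ^ ((k:ℝ))⁻¹
      = (1 + α) * (x ^ ((3:ℝ))⁻¹ * auxF x) := by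
    have h3 : x ^ ((3:ℝ))⁻¹ * auxF x = ∑ k ∈ Finset.Icc 3 K, x ^ ((k:ℝ))⁻¹ := by
      unfold auxF
      rw [← hK, Finset.mul_sum]
      refine Finset.sum_congr rfl fun k hk => ?_
      rw [← Real.rpow_add hx0]
      congr 1
      ring
    rw [h3, Finset.mul_sum]
  have hMle := auxF_le_max b x hb hxe
  have hfinal2 : ∑ k ∈ Finset.Icc 3 K, (1 + α) * x ^ ((k:ℝ))⁻¹
      ≤ ((1 + α) * max (auxF (Real.exp b)) (auxF ((2:ℝ) ^ (⌊b / Real.log 2⌋₊ + 1))))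
        * x ^ ((1:ℝ)/3) := by
    rw [hsum_eq]
    have h13 : x ^ ((1:ℝ)/3) = x ^ ((3:ℝ))⁻¹ := by norm_num
    rw [h13]
    have hpos3 : (0:ℝ) ≤ x ^ ((3:ℝ))⁻¹ := (Real.rpow_pos_of_pos hx0 _).le
    have h1α : (0:ℝ) ≤ 1 + α := by linarith
    calc (1 + α) * (x ^ ((3:ℝ))⁻¹ * auxF x)
        ≤ (1 + α) * (x ^ ((3:ℝ))⁻¹
            * max (auxF (Real.exp b)) (auxF ((2:ℝ) ^ (⌊b / Real.log 2⌋₊ + 1)))) := by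
          exact mul_le_mul_of_nonneg_left (mul_le_mul_of_nonneg_left hMle hpos3) h1α
      _ = ((1 + α) * max (auxF (Real.exp b)) (auxF ((2:ℝ) ^ (⌊b / Real.log 2⌋₊ + 1))))
            * x ^ ((3:ℝ))⁻¹ := by ring
  have h12 : x ^ ((1:ℝ)/2) = y := by rw [hy]; norm_num
  rw [hid, h12]
  have hcomb := add_lt_add_of_le_of_lt hθy (lt_of_lt_of_le htail hfinal2)
  linarith
end

section
/- Let k ∈ {1,2,3,4,5} and let b, b′ be reals with b′ > b ≥ 2k. Assume there exists ε > 0 such that |ψ(x) − x| ≤ ε·x for all x ∈ [e^b, e^{b′}], and assume a₁, a₂ ≥ 0 satisfy ψ(x) − θ(x) ≤ a₁·x^{1/2} + a₂·x^{1/3} for all x ≥ e^b. Then for all x ∈ [e^b, e^{b′}] one has |θ(x) − x| ≤ B_k(b,b′)·x/(log x)^k, where B_k(b,b′) = a₁·b^k·e^{−b/2} + a₂·b^k·e^{−2b/3} + (b′)^k·ε. -/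
lemma chebTheta_le_chebPsi (x : ℝ) : chebTheta x ≤ chebPsi x := by
  unfold chebTheta chebPsi
  rw [Finset.sum_congr rfl (fun p hp =>
    (ArithmeticFunction.vonMangoldt_apply_prime (Finset.mem_filter.mp hp).2).symm)]
  exact Finset.sum_le_sum_of_subset_of_nonneg (Finset.filter_subset _ _)
    (fun n _ _ => ArithmeticFunction.vonMangoldt_nonneg)

lemma key_decay (k : ℕ) (c b L : ℝ) (hb0 : 0 < b) (hbk : (k : ℝ) ≤ c * b) (hbL : b ≤ L) :
    L ^ k * Real.exp (-(c * L)) ≤ b ^ k * Real.exp (-(c * b)) := by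
  have hc : 0 ≤ c := by nlinarith [Nat.cast_nonneg (α := ℝ) k]
  have hL0 : 0 < L := lt_of_lt_of_le hb0 hbL
  have h1 : L ≤ b * Real.exp ((L - b) / b) := by
    have := Real.add_one_le_exp ((L - b) / b)
    calc L = b * ((L - b) / b + 1) := by field_simp; ring
    _ ≤ b * Real.exp ((L - b) / b) := by
        exact mul_le_mul_of_nonneg_left this hb0.le
  have h2 : L ^ k ≤ b ^ k * Real.exp ((k : ℝ) * ((L - b) / b)) := by
    calc L ^ k ≤ (b * Real.exp ((L - b) / b)) ^ k :=
          pow_le_pow_left₀ hL0.le h1 k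
      _ = b ^ k * Real.exp ((k : ℝ) * ((L - b) / b)) := by
          rw [mul_pow, ← Real.exp_nat_mul]
  have h3 : (k : ℝ) * ((L - b) / b) ≤ c * (L - b) := by
    rw [mul_div_assoc', div_le_iff₀ hb0]
    nlinarith
  calc L ^ k * Real.exp (-(c * L))
      ≤ b ^ k * Real.exp ((k : ℝ) * ((L - b) / b)) * Real.exp (-(c * L)) := by
        exact mul_le_mul_of_nonneg_right h2 (Real.exp_pos _).le
    _ ≤ b ^ k * Real.exp (c * (L - b)) * Real.exp (-(c * L)) :=
        mul_le_mul_of_nonneg_right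
          (mul_le_mul_of_nonneg_left (Real.exp_le_exp.mpr h3) (pow_nonneg hb0.le k))
          (Real.exp_pos _).le
    _ = b ^ k * Real.exp (-(c * b)) := by
        rw [mul_assoc, ← Real.exp_add]; ring_nf

theorem statement10 (k : ℕ) (hk1 : 1 ≤ k) (hk5 : k ≤ 5)
    (b b' : ℝ) (hbb' : b < b') (hb : 2 * (k : ℝ) ≤ b)
    (ε : ℝ) (hε : ε > 0)
    (hψ : ∀ x : ℝ, Real.exp b ≤ x → x ≤ Real.exp b' → |chebPsi x - x| ≤ ε * x)
    (a₁ a₂ : ℝ) (ha₁ : 0 ≤ a₁) (ha₂ : 0 ≤ a₂)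
    (hψθ : ∀ x : ℝ, x ≥ Real.exp b →
      chebPsi x - chebTheta x ≤ a₁ * x ^ ((1 : ℝ) / 2) + a₂ * x ^ ((1 : ℝ) / 3)) :
    ∀ x : ℝ, Real.exp b ≤ x → x ≤ Real.exp b' →
      |chebTheta x - x| ≤
        (a₁ * b ^ k * Real.exp (-b / 2) + a₂ * b ^ k * Real.exp (-2 * b / 3)
            + b' ^ k * ε) * x / (Real.log x) ^ k := by
  intro x hx1 hx2
  have hk0 : (0 : ℝ) < k := by exact_mod_cast hk1
  have hb0 : (0 : ℝ) < b := by linarith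
  have hx0 : 0 < x := lt_of_lt_of_le (Real.exp_pos b) hx1
  set L := Real.log x with hLdef
  have hbL : b ≤ L := by
    rw [hLdef, Real.le_log_iff_exp_le hx0]; exact hx1
  have hLb' : L ≤ b' := by
    rw [hLdef, Real.log_le_iff_le_exp hx0]; exact hx2
  have hL0 : 0 < L := lt_of_lt_of_le hb0 hbL
  have hLk : 0 < L ^ k := pow_pos hL0 k
  have hxL : x = Real.exp L := (Real.exp_log hx0).symm
  have hθψ := chebTheta_le_chebPsi x
  have hψ' := hψ x hx1 hx2
  have hψθ' := hψθ x (by exact hx1)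
  have hx12 : x ^ ((1 : ℝ) / 2) = x * Real.exp (-(1 / 2 * L)) := by
    rw [Real.rpow_def_of_pos hx0, ← hLdef]
    conv_rhs => rw [hxL]
    rw [← Real.exp_add]
    congr 1; ring
  have hx13 : x ^ ((1 : ℝ) / 3) = x * Real.exp (-(2 / 3 * L)) := by
    rw [Real.rpow_def_of_pos hx0, ← hLdef]
    conv_rhs => rw [hxL]
    rw [← Real.exp_add]
    congr 1; ring
  have K1 := key_decay k (1 / 2) b L hb0 (by push_cast; linarith) hbL
  have K2 := key_decay k (2 / 3) b L hb0 (by push_cast; linarith) hbL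
  have habs : |chebTheta x - x| ≤ ε * x + (a₁ * x ^ ((1 : ℝ) / 2) + a₂ * x ^ ((1 : ℝ) / 3)) := by
    have h1 : chebTheta x - x = (chebPsi x - x) - (chebPsi x - chebTheta x) := by ring
    rw [h1]
    calc |(chebPsi x - x) - (chebPsi x - chebTheta x)|
        ≤ |chebPsi x - x| + |chebPsi x - chebTheta x| := abs_sub _ _
      _ = |chebPsi x - x| + (chebPsi x - chebTheta x) := by
          rw [abs_of_nonneg (sub_nonneg.mpr hθψ)]
      _ ≤ ε * x + (a₁ * x ^ ((1 : ℝ) / 2) + a₂ * x ^ ((1 : ℝ) / 3)) := add_le_add hψ' hψθ'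
  rw [le_div_iff₀ hLk]
  calc |chebTheta x - x| * L ^ k
      ≤ (ε * x + (a₁ * (x * Real.exp (-(1 / 2 * L))) + a₂ * (x * Real.exp (-(2 / 3 * L))))) * L ^ k := by
        rw [← hx12, ← hx13]
        exact mul_le_mul_of_nonneg_right habs hLk.le
    _ = ε * x * L ^ k + a₁ * x * (L ^ k * Real.exp (-(1 / 2 * L)))
          + a₂ * x * (L ^ k * Real.exp (-(2 / 3 * L))) := by ring
    _ ≤ ε * x * b' ^ k + a₁ * x * (b ^ k * Real.exp (-(1 / 2 * b)))
          + a₂ * x * (b ^ k * Real.exp (-(2 / 3 * b))) := by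
        have E0 : ε * x * L ^ k ≤ ε * x * b' ^ k :=
          mul_le_mul_of_nonneg_left (pow_le_pow_left₀ hL0.le hLb' k)
            (mul_nonneg hε.le hx0.le)
        have E1 := mul_le_mul_of_nonneg_left K1 (mul_nonneg ha₁ hx0.le)
        have E2 := mul_le_mul_of_nonneg_left K2 (mul_nonneg ha₂ hx0.le)
        linarith
    _ = (a₁ * b ^ k * Real.exp (-b / 2) + a₂ * b ^ k * Real.exp (-2 * b / 3) + b' ^ k * ε) * x := by
        ring_nf
end
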